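/- In the left-censored disclosure model, let E₀ = {e ∈ E : N(e) = 0}. Then ν(L₀) ≥ ν(E₀) for every lower contour set L₀ in E₀ with respect to the suffix order ≼. -/

import Mathlib

open scoped BigOperators

namespace LeftCensored

/-- Evidence: a finite sequence of binary signals; `true` stands for a high
return (`g`) and `false` for a low return (`b`). A sequence is a list whose
suffixes are the most recent signals. -/
abbrev Ev := List Bool

/-- `G(e)`: the number of `g`'s in `e`. -/
def Gc (e : Ev) : ℕ := e.count true

/-- `B(e)`: the number of `b`'s in `e`. -/
def Bc (e : Ev) : ℕ := e.count false

/-- `D(e) = G(e) − B(e)`. -/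
def D (e : Ev) : ℤ := (Gc e : ℤ) - (Bc e : ℤ)

/-- `N(e) = max_{0 ≤ k ≤ L(e)} D(e|_k)`, the maximum of `D` over all suffixes
(truncations from the left) of `e`; since the empty suffix gives `D = 0`, this
equals the fold of `max` over the suffixes starting from `0`. -/
def N (e : Ev) : ℤ := (e.tails.map D).foldr max 0

/-- The evidence distribution in the good state. -/
noncomputable def FG (p q : ℝ) (e : Ev) : ℝ := (1 - p - q) * p ^ Gc e * q ^ Bc e

/-- The evidence distribution in the bad state. -/
noncomputable def FB (p q : ℝ) (e : Ev) : ℝ := (1 - p - q) * p ^ Bc e * q ^ Gc e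

/-- Posterior belief `ν(A)` that the state is good given evidence in `A`. -/
noncomputable def nu (p q π0 : ℝ) (A : Set Ev) : ℝ :=
  ((∑' e : A, FG p q e) * π0) /
    ((∑' e : A, FG p q e) * π0 + (∑' e : A, FB p q e) * (1 - π0))

/-- `α = (1 − √(1 − 4pq))/2`. -/
noncomputable def alpha (p q : ℝ) : ℝ := (1 - Real.sqrt (1 - 4 * p * q)) / 2

/-- The sender's equilibrium value function (Proposition 4). -/
noncomputable def V (p q π0 : ℝ) (e : Ev) : ℝ :=
  1 / (1 + ((1 - π0) / π0) * ((p - alpha p q) / (q - alpha p q)) * (q / p) ^ (N e + 1))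

/-- `L` is a (nonempty) lower contour set in `A` with respect to the suffix
(left-censoring) order. -/
def IsLCS (A L : Set Ev) : Prop :=
  L.Nonempty ∧ L ⊆ A ∧ ∀ e ∈ L, ∀ e' ∈ A, e' <:+ e → e' ∈ L

/-- A truth-leaning equilibrium of the left-censored disclosure game (the
receiver's response `φ` is the identity). -/
structure Eqm (p q π0 : ℝ) where
  σ : Ev → Ev → ℝ
  act : Ev → ℝ
  μ : Ev → ℝ
  σ_nonneg : ∀ e m, 0 ≤ σ e m
  σ_hasSum : ∀ e, HasSum (σ e) 1
  feasible : ∀ e m, 0 < σ e m → m <:+ e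
  μ_mem : ∀ m, μ m ∈ Set.Icc (0 : ℝ) 1
  sender_opt : ∀ e m, 0 < σ e m → ∀ m', m' <:+ e → act m' ≤ act m
  receiver_opt : ∀ m, act m = μ m
  bayes : ∀ m, (∃ e, 0 < σ e m) →
    μ m = (∑' e : {e : Ev // m <:+ e}, σ e.1 m * FG p q e.1 * π0) /
      (∑' e : {e : Ev // m <:+ e}, σ e.1 m * (FG p q e.1 * π0 + FB p q e.1 * (1 - π0)))
  truth_leaning : ∀ e, (∀ m, m <:+ e → act m ≤ act e) → σ e e = 1
  offpath : ∀ m, (¬ ∃ e, 0 < σ e m) → μ m = nu p q π0 {m}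

end LeftCensored

namespace LeftCensored


section Aux

/-! ### Basic facts about `D` and `N` -/

lemma D_nil : D ([] : Ev) = 0 := rfl
lemma N_nil : N ([] : Ev) = 0 := rfl

lemma N_cons (x : Bool) (e : Ev) : N (x :: e) = max (D (x :: e)) (N e) := by
  simp [N]

lemma D_append (w e : Ev) : D (w ++ e) = D w + D e := by
  simp [D, Gc, Bc]; ring

lemma N_nonneg (e : Ev) : 0 ≤ N e := by
  induction e with
  | nil => simp [N_nil]
  | cons x e ih => rw [N_cons]; exact le_max_of_le_right ih

lemma D_le_N (e : Ev) : D e ≤ N e := by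
  cases e with
  | nil => simp [D_nil, N_nil]
  | cons x e => rw [N_cons]; exact le_max_left _ _

lemma N_append (w e : Ev) : N (w ++ e) = max (N w + D e) (N e) := by
  induction w with
  | nil => simp [N_nil, max_eq_right (D_le_N e)]
  | cons x w ih =>
      have h2 : D (x :: (w ++ e)) = D (x :: w) + D e := D_append (x :: w) e
      rw [List.cons_append, N_cons, ih, N_cons, h2, ← max_assoc, max_add_add_right]

lemma N_suffix_le {s e : Ev} (h : s <:+ e) : N s ≤ N e := by
  obtain ⟨w, rfl⟩ := h
  rw [N_append]; exact le_max_right _ _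

lemma D_suffix_le {s e : Ev} (h : s <:+ e) : D s ≤ N e :=
  le_trans (D_le_N s) (N_suffix_le h)

lemma D_cons_true (e : Ev) : D (true :: e) = D e + 1 := by
  simp [D, Gc, Bc]; ring

/-! ### Basic facts about the weights `FG`, `FB` -/

lemma Gc_nil : Gc ([] : Ev) = 0 := rfl
lemma Bc_nil : Bc ([] : Ev) = 0 := rfl
lemma FG_nil (p q : ℝ) : FG p q [] = 1 - p - q := by simp [FG, Gc_nil, Bc_nil]

lemma FG_pos {p q : ℝ} (hp : 0 < p) (hq : 0 < q) (hpq : p + q < 1) (e : Ev) : 0 < FG p q e := by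
  have : 0 < 1 - p - q := by linarith
  exact mul_pos (mul_pos this (pow_pos hp _)) (pow_pos hq _)

lemma Gc_append (w e : Ev) : Gc (w ++ e) = Gc w + Gc e := by simp [Gc]
lemma Bc_append (w e : Ev) : Bc (w ++ e) = Bc w + Bc e := by simp [Bc]
lemma Gc_cons_true (e : Ev) : Gc (true :: e) = Gc e + 1 := by simp [Gc]
lemma Bc_cons_true (e : Ev) : Bc (true :: e) = Bc e := by simp [Bc]

lemma FG_append {p q : ℝ} (w e : Ev) :
    (1 - p - q) * FG p q (w ++ e) = FG p q w * FG p q e := by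
  simp [FG, Gc_append, Bc_append, pow_add]; ring

lemma FG_cons_true {p q : ℝ} (u : Ev) : FG p q (true :: u) = p * FG p q u := by
  simp [FG, Gc_cons_true, Bc_cons_true, pow_succ]; ring

lemma FG_swap {p q : ℝ} (e : Ev) : FG q p e = (1 - p - q) * p ^ Bc e * q ^ Gc e := by
  simp [FG]; ring

lemma FG_D_zero {p q : ℝ} (e : Ev) (h : D e = 0) : FG q p e = FG p q e := by
  have h2 : Bc e = Gc e := by simp [D] at h; omega
  rw [FG_swap, FG, h2]

lemma FB_eq_FG_swap (p q : ℝ) (e : Ev) : FB p q e = FG q p e := by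
  rw [FB, FG]; ring

/-! ### Summability -/

lemma sum_bound {p q : ℝ} (hp : 0 < p) (hq : 0 < q) :
    ∀ (n : ℕ) (u : Finset Ev), (∀ e ∈ u, e.length < n) →
    ∑ e ∈ u, p ^ Gc e * q ^ Bc e ≤ ∑ k ∈ Finset.range n, (p + q) ^ k := by
  intro n
  induction n with
  | zero => intro u hu
            have : u = ∅ := Finset.eq_empty_of_forall_notMem (fun e he => by simpa using hu e he)
            simp [this]
  | succ n ih =>
      intro u hu
      classical
      have hfnn : ∀ e : Ev, 0 ≤ p ^ Gc e * q ^ Bc e :=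
        fun e => mul_nonneg (pow_nonneg hp.le _) (pow_nonneg hq.le _)
      rw [← Finset.sum_filter_add_sum_filter_not u (fun e => e = ([]:Ev))]
      rw [← Finset.sum_filter_add_sum_filter_not (u.filter (fun e => ¬ e = ([]:Ev)))
            (fun e => e.head? = some true)]
      set u0 := u.filter (fun e => e = ([]:Ev)) with hu0
      set ut := (u.filter (fun e => ¬ e = ([]:Ev))).filter (fun e => e.head? = some true) with hut
      set uf := (u.filter (fun e => ¬ e = ([]:Ev))).filter (fun e => ¬ e.head? = some true) with huf
      have b0 : ∑ e ∈ u0, p ^ Gc e * q ^ Bc e ≤ 1 := by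
        have hsub : u0 ⊆ {([] : Ev)} := by
          intro e he
          rw [hu0, Finset.mem_filter] at he
          simp [he.2]
        calc ∑ e ∈ u0, p ^ Gc e * q ^ Bc e
            ≤ ∑ e ∈ ({([] : Ev)} : Finset Ev), p ^ Gc e * q ^ Bc e :=
              Finset.sum_le_sum_of_subset_of_nonneg hsub (fun i _ _ => hfnn i)
          _ = 1 := by simp [Gc_nil, Bc_nil]
      have bt : ∑ e ∈ ut, p ^ Gc e * q ^ Bc e ≤ p * ∑ k ∈ Finset.range n, (p + q) ^ k := by
        have hform : ∀ e ∈ ut, e = true :: e.tail := by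
          intro e he
          rw [hut, Finset.mem_filter] at he
          cases e with
          | nil => simp at he
          | cons x t => simp at he; simp [he.2]
        have h1 : ∑ e ∈ ut, p ^ Gc e * q ^ Bc e
            = ∑ e ∈ ut, p * (p ^ Gc e.tail * q ^ Bc e.tail) := by
          refine Finset.sum_congr rfl (fun e he => ?_)
          conv_lhs => rw [hform e he]
          rw [Gc_cons_true, Bc_cons_true, pow_succ]; ring
        have hinj : ∀ x ∈ ut, ∀ y ∈ ut, x.tail = y.tail → x = y := by
          intro x hx y hy hxy
          rw [hform x hx, hform y hy, hxy]
        have h2 : ∑ e ∈ ut.image List.tail, p ^ Gc e * q ^ Bc e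
            = ∑ e ∈ ut, p ^ Gc e.tail * q ^ Bc e.tail := Finset.sum_image hinj
        have h3 : ∀ t ∈ ut.image List.tail, t.length < n := by
          intro t ht
          rw [Finset.mem_image] at ht
          obtain ⟨e, he, rfl⟩ := ht
          have he' : e ∈ u := Finset.mem_of_mem_filter _ (Finset.mem_of_mem_filter _ he)
          have := hu e he'
          have hne : e ≠ [] := by
            rw [hut, Finset.mem_filter, Finset.mem_filter] at he
            exact he.1.2
          cases e with
          | nil => exact absurd rfl hne
          | cons x t => simp at this ⊢; omega
        rw [h1, ← Finset.mul_sum, ← h2]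
        exact mul_le_mul_of_nonneg_left (ih _ h3) hp.le
      have bf : ∑ e ∈ uf, p ^ Gc e * q ^ Bc e ≤ q * ∑ k ∈ Finset.range n, (p + q) ^ k := by
        have hform : ∀ e ∈ uf, e = false :: e.tail := by
          intro e he
          rw [huf, Finset.mem_filter, Finset.mem_filter] at he
          cases e with
          | nil => exact absurd rfl he.1.2
          | cons x t =>
              cases x with
              | true => simp at he
              | false => simp
        have h1 : ∑ e ∈ uf, p ^ Gc e * q ^ Bc e
            = ∑ e ∈ uf, q * (p ^ Gc e.tail * q ^ Bc e.tail) := by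
          refine Finset.sum_congr rfl (fun e he => ?_)
          conv_lhs => rw [hform e he]
          have hg : Gc (false :: e.tail) = Gc e.tail := by simp [Gc]
          have hb : Bc (false :: e.tail) = Bc e.tail + 1 := by simp [Bc]
          rw [hg, hb, pow_succ]; ring
        have hinj : ∀ x ∈ uf, ∀ y ∈ uf, x.tail = y.tail → x = y := by
          intro x hx y hy hxy
          rw [hform x hx, hform y hy, hxy]
        have h2 : ∑ e ∈ uf.image List.tail, p ^ Gc e * q ^ Bc e
            = ∑ e ∈ uf, p ^ Gc e.tail * q ^ Bc e.tail := Finset.sum_image hinj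
        have h3 : ∀ t ∈ uf.image List.tail, t.length < n := by
          intro t ht
          rw [Finset.mem_image] at ht
          obtain ⟨e, he, rfl⟩ := ht
          have he' : e ∈ u := Finset.mem_of_mem_filter _ (Finset.mem_of_mem_filter _ he)
          have := hu e he'
          have hne : e ≠ [] := by
            rw [huf, Finset.mem_filter, Finset.mem_filter] at he
            exact he.1.2
          cases e with
          | nil => exact absurd rfl hne
          | cons x t => simp at this ⊢; omega
        rw [h1, ← Finset.mul_sum, ← h2]
        exact mul_le_mul_of_nonneg_left (ih _ h3) hq.le
      rw [geom_sum_succ]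
      linarith

lemma summable_FG {p q : ℝ} (hp : 0 < p) (hq : 0 < q) (hpq : p + q < 1) :
    Summable (FG p q) := by
  have hκ : (0:ℝ) < 1 - p - q := by linarith
  have hgs : ∀ n : ℕ, ∑ k ∈ Finset.range n, (p + q) ^ k ≤ (1 - (p+q))⁻¹ := by
    intro n
    have hsum : Summable (fun k : ℕ => (p+q)^k) :=
      summable_geometric_of_lt_one (by positivity) hpq
    calc ∑ k ∈ Finset.range n, (p + q) ^ k ≤ ∑' k : ℕ, (p+q)^k :=
          Summable.sum_le_tsum _ (fun i _ => by positivity) hsum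
      _ = (1 - (p+q))⁻¹ := tsum_geometric_of_lt_one (by positivity) hpq
  apply summable_of_sum_le (c := (1 - p - q) * (1 - (p+q))⁻¹)
  · intro e
    exact (FG_pos hp hq hpq e).le
  · intro u
    have h1 : ∑ e ∈ u, FG p q e = (1 - p - q) * ∑ e ∈ u, p ^ Gc e * q ^ Bc e := by
      rw [Finset.mul_sum]
      exact Finset.sum_congr rfl (fun e _ => by rw [FG]; ring)
    rw [h1]
    have h2 : ∀ e ∈ u, e.length < u.sup List.length + 1 := by
      intro e he
      exact Nat.lt_succ_of_le (Finset.le_sup he)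
    calc (1 - p - q) * ∑ e ∈ u, p ^ Gc e * q ^ Bc e
        ≤ (1 - p - q) * ∑ k ∈ Finset.range (u.sup List.length + 1), (p + q) ^ k :=
          mul_le_mul_of_nonneg_left (sum_bound hp hq _ u h2) hκ.le
      _ ≤ (1 - p - q) * (1 - (p+q))⁻¹ := mul_le_mul_of_nonneg_left (hgs _) hκ.le

/-! ### First-passage decomposition -/

lemma exists_fp : ∀ e : Ev, 1 ≤ N e → ∃ w u : Ev, e = w ++ true :: u ∧ N u = 0 ∧ D u = 0 := by
  intro e
  induction e with
  | nil => intro h; rw [N_nil] at h; omega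
  | cons x e ih =>
      intro h
      by_cases he : 1 ≤ N e
      · obtain ⟨w, u, rfl, hu1, hu2⟩ := ih he
        exact ⟨x :: w, u, rfl, hu1, hu2⟩
      · have hN0 : N e = 0 := le_antisymm (by omega) (N_nonneg e)
        have hD : D e ≤ 0 := hN0 ▸ D_le_N e
        rw [N_cons, hN0] at h
        have hDx : 1 ≤ D (x :: e) := by
          rcases max_cases (D (x :: e)) (0:ℤ) with ⟨h1, _⟩ | ⟨h1, _⟩ <;> omega
        cases x with
        | false =>
            have : D (false :: e) = D e - 1 := by simp [D, Gc, Bc]; ring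
            rw [this] at hDx; omega
        | true =>
            rw [D_cons_true] at hDx
            exact ⟨[], e, rfl, hN0, by omega⟩

lemma fp_unique : ∀ w₁ w₂ u₁ u₂ : Ev, w₁ ++ true :: u₁ = w₂ ++ true :: u₂ →
    N u₁ = 0 → N u₂ = 0 → D u₁ = 0 → D u₂ = 0 → w₁ = w₂ ∧ u₁ = u₂ := by
  intro w₁
  induction w₁ with
  | nil =>
      intro w₂ u₁ u₂ heq h1 h2 hd1 hd2
      cases w₂ with
      | nil => simp at heq; simp [heq]
      | cons y w₂ =>
          exfalso
          simp only [List.nil_append, List.cons_append, List.cons.injEq] at heq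
          have hsuf : (true :: u₂) <:+ u₁ := ⟨w₂, heq.2.symm⟩
          have := D_suffix_le hsuf
          rw [D_cons_true, h1, hd2] at this
          omega
  | cons x w₁ ih =>
      intro w₂ u₁ u₂ heq h1 h2 hd1 hd2
      cases w₂ with
      | nil =>
          exfalso
          simp only [List.cons_append, List.nil_append, List.cons.injEq] at heq
          have hsuf : (true :: u₁) <:+ u₂ := ⟨w₁, heq.2⟩
          have := D_suffix_le hsuf
          rw [D_cons_true, h2, hd1] at this
          omega
      | cons y w₂ =>
          simp only [List.cons_append, List.cons.injEq] at heq
          obtain ⟨h3, h4⟩ := ih w₂ u₁ u₂ heq.2 h1 h2 hd1 hd2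
          exact ⟨by rw [heq.1, h3], h4⟩

/-! ### The minimal suffix (`root`) of a sequence inside a set -/

open Classical in
/-- the shortest suffix of `e` lying in `M` (if any). -/
noncomputable def root (M : Set Ev) : Ev → Ev
  | [] => []
  | x :: e => if ∃ s : Ev, s <:+ e ∧ s ∈ M then root M e else x :: e

lemma root_suffix (M : Set Ev) : ∀ e : Ev, root M e <:+ e := by
  intro e
  induction e with
  | nil => simp [root]
  | cons x e ih =>
      rw [root]
      split
      · exact ih.trans (List.suffix_cons x e)
      · exact List.suffix_rfl

lemma root_mem (M : Set Ev) : ∀ e : Ev, (∃ s : Ev, s <:+ e ∧ s ∈ M) → root M e ∈ M := by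
  intro e
  induction e with
  | nil =>
      rintro ⟨s, hs, hsm⟩
      rw [List.suffix_nil] at hs
      subst hs; simpa [root] using hsm
  | cons x e ih =>
      rintro ⟨s, hs, hsm⟩
      rw [root]
      split
      · exact ih ‹_›
      · rename_i hno
        rcases List.suffix_cons_iff.mp hs with h | h
        · subst h; exact hsm
        · exact absurd ⟨s, h, hsm⟩ hno

lemma root_min (M : Set Ev) : ∀ e s : Ev, s <:+ e → s ∈ M → root M e <:+ s := by
  intro e
  induction e with
  | nil => intro s hs _; rw [List.suffix_nil] at hs; subst hs; simp [root]
  | cons x e ih =>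
      intro s hs hsm
      rw [root]
      split
      · rcases List.suffix_cons_iff.mp hs with h | h
        · subst h
          exact (root_suffix M e).trans ((List.suffix_cons x e))
        · exact ih s h hsm
      · rename_i hno
        rcases List.suffix_cons_iff.mp hs with h | h
        · subst h; exact List.suffix_rfl
        · exact absurd ⟨s, h, hsm⟩ hno

lemma root_spec {M : Set Ev} {e : Ev} (he : e ∈ M) :
    root M e ∈ M ∧ root M e <:+ e ∧ ∀ s : Ev, s <:+ root M e → s ∈ M → s = root M e := by
  refine ⟨root_mem M e ⟨e, List.suffix_rfl, he⟩, root_suffix M e, fun s hs hsm => ?_⟩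
  have h2 : root M e <:+ s := root_min M e s (hs.trans (root_suffix M e)) hsm
  exact hs.eq_of_length (le_antisymm hs.length_le h2.length_le)

lemma root_eq_iff {M : Set Ev} {e b : Ev} (he : e ∈ M) (hb : b ∈ M)
    (hbmin : ∀ s : Ev, s <:+ b → s ∈ M → s = b) :
    root M e = b ↔ b <:+ e := by
  obtain ⟨h1, h2, h3⟩ := root_spec he
  constructor
  · rintro rfl; exact h2
  · intro hbe
    have h4 : root M e <:+ b := root_min M e b hbe hb
    exact hbmin _ h4 h1

/-! ### The aggregate weights `TG` and `Z` -/

/-- total `FG`-weight of sequences with `N ≤ m`. -/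
noncomputable def TG (p q : ℝ) (m : ℕ) : ℝ := ∑' e : {e : Ev // N e ≤ (m:ℤ)}, FG p q e.1

/-- total `FG`-weight of sequences with `N = 0` and `D = 0`. -/
noncomputable def Z (p q : ℝ) : ℝ := ∑' u : {u : Ev // N u = 0 ∧ D u = 0}, FG p q u.1

section Core
variable {p q : ℝ} (hp : 0 < p) (hq : 0 < q) (hpq : p + q < 1)

include hp hq hpq

lemma norm_summable_subtype (S : Set Ev) : Summable (fun e : S => ‖FG p q e.1‖) := by
  have h1 : (fun e : S => ‖FG p q e.1‖) = fun e : S => FG p q e.1 := by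
    funext e; exact Real.norm_of_nonneg (FG_pos hp hq hpq _).le
  rw [h1]
  exact (summable_FG hp hq hpq).subtype S

lemma Z_pos : 0 < Z p q := by
  have := Summable.le_tsum (((summable_FG hp hq hpq).subtype
      {u : Ev | N u = 0 ∧ D u = 0}).congr (fun _ => rfl))
    (⟨([] : Ev), by constructor <;> rfl⟩ : {u : Ev // N u = 0 ∧ D u = 0})
    (fun _ _ => (FG_pos hp hq hpq _).le)
  calc (0:ℝ) < FG p q [] := FG_pos hp hq hpq []
    _ ≤ Z p q := this

lemma TG_pos (m : ℕ) : 0 < TG p q m := by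
  have := Summable.le_tsum (((summable_FG hp hq hpq).subtype
      {e : Ev | N e ≤ (m:ℤ)}).congr (fun _ => rfl))
    (⟨([] : Ev), by simp [N_nil]⟩ : {e : Ev // N e ≤ (m:ℤ)})
    (fun _ _ => (FG_pos hp hq hpq _).le)
  calc (0:ℝ) < FG p q [] := FG_pos hp hq hpq []
    _ ≤ TG p q m := this

lemma TG_rec (m : ℕ) :
    (1 - p - q) * TG p q (m+1) = (1 - p - q) * TG p q 0 + (p * Z p q) * TG p q m := by
  classical
  set s : Set Ev := {e : Ev | N e = 0} with hs
  set t : Set Ev := {e : Ev | 1 ≤ N e ∧ N e ≤ (m:ℤ)+1} with ht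
  have hst : {e : Ev | N e ≤ ((m+1:ℕ):ℤ)} = s ∪ t := by
    ext e
    have := N_nonneg e
    simp only [hs, ht, Set.mem_setOf_eq, Set.mem_union]
    push_cast
    omega
  have hdisj : Disjoint s t := by
    rw [Set.disjoint_left]
    intro e he1 he2
    rw [hs, Set.mem_setOf_eq] at he1
    rw [ht, Set.mem_setOf_eq] at he2
    omega
  have hsplit : TG p q (m+1) = (∑' e : s, FG p q e.1) + ∑' e : t, FG p q e.1 := by
    rw [TG]
    show (∑' e : ↥{e : Ev | N e ≤ ((m+1:ℕ):ℤ)}, FG p q e.1) = _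
    rw [hst]
    exact Summable.tsum_union_disjoint hdisj
      ((summable_FG hp hq hpq).subtype s) ((summable_FG hp hq hpq).subtype t)
  let Ψ : ({w : Ev // N w ≤ (m:ℤ)} × {u : Ev // N u = 0 ∧ D u = 0}) → t := fun z =>
    ⟨z.1.1 ++ true :: z.2.1, by
      have h1 : D (true :: z.2.1) = 1 := by rw [D_cons_true, z.2.2.2]; omega
      have h2 : N (true :: z.2.1) = 1 := by
        rw [N_cons, h1, z.2.2.1]; omega
      have h3 : N (z.1.1 ++ true :: z.2.1) = max (N z.1.1 + 1) 1 := by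
        rw [N_append, h1, h2]
      have h4 := z.1.2
      have h5 := N_nonneg z.1.1
      rw [ht, Set.mem_setOf_eq, h3]
      constructor <;> [exact le_max_right _ _; omega]⟩
  have hbij : Function.Bijective Ψ := by
    constructor
    · rintro ⟨⟨w₁, hw₁⟩, ⟨u₁, hu₁⟩⟩ ⟨⟨w₂, hw₂⟩, ⟨u₂, hu₂⟩⟩ h
      have h' : w₁ ++ true :: u₁ = w₂ ++ true :: u₂ := congrArg Subtype.val h
      obtain ⟨e1, e2⟩ := fp_unique w₁ w₂ u₁ u₂ h' hu₁.1 hu₂.1 hu₁.2 hu₂.2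
      simp [Prod.ext_iff, Subtype.ext_iff, e1, e2]
    · rintro ⟨e, he⟩
      rw [ht, Set.mem_setOf_eq] at he
      obtain ⟨w, u, rfl, hu1, hu2⟩ := exists_fp e he.1
      have h1 : D (true :: u) = 1 := by rw [D_cons_true, hu2]; omega
      have h2 : N (true :: u) = 1 := by rw [N_cons, h1, hu1]; omega
      have h3 : N (w ++ true :: u) = max (N w + 1) 1 := by rw [N_append, h1, h2]
      have hw : N w ≤ (m:ℤ) := by
        have := he.2; rw [h3] at this
        have := le_max_left (N w + 1) 1
        omega
      exact ⟨⟨⟨w, hw⟩, ⟨u, hu1, hu2⟩⟩, rfl⟩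
  have heq : (∑' z : ({w : Ev // N w ≤ (m:ℤ)} × {u : Ev // N u = 0 ∧ D u = 0}),
      FG p q ((Ψ z : Ev))) = ∑' e : t, FG p q e.1 :=
    (Equiv.ofBijective Ψ hbij).tsum_eq (fun e : t => FG p q e.1)
  have hZmul : (∑' u : {u : Ev // N u = 0 ∧ D u = 0}, p * FG p q u.1) = p * Z p q :=
    tsum_mul_left
  have hnorm2 : Summable (fun u : {u : Ev // N u = 0 ∧ D u = 0} => ‖p * FG p q u.1‖) := by
    have h1 : (fun u : {u : Ev // N u = 0 ∧ D u = 0} => ‖p * FG p q u.1‖)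
        = fun u : {u : Ev // N u = 0 ∧ D u = 0} => p * FG p q u.1 := by
      funext u
      exact Real.norm_of_nonneg (mul_nonneg hp.le (FG_pos hp hq hpq _).le)
    rw [h1]
    exact Summable.mul_left p
      (((summable_FG hp hq hpq).subtype {u : Ev | N u = 0 ∧ D u = 0}).congr (fun _ => rfl))
  have hnorm1 : Summable (fun w : {w : Ev // N w ≤ (m:ℤ)} => ‖FG p q w.1‖) :=
    (norm_summable_subtype hp hq hpq {w : Ev | N w ≤ (m:ℤ)}).congr (fun _ => rfl)
  have hprod : (∑' w : {w : Ev // N w ≤ (m:ℤ)}, FG p q w.1) *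
      (∑' u : {u : Ev // N u = 0 ∧ D u = 0}, p * FG p q u.1)
      = ∑' z : ({w : Ev // N w ≤ (m:ℤ)} × {u : Ev // N u = 0 ∧ D u = 0}),
          FG p q z.1.1 * (p * FG p q z.2.1) :=
    tsum_mul_tsum_of_summable_norm hnorm1 hnorm2
  have hpt : ∀ z : ({w : Ev // N w ≤ (m:ℤ)} × {u : Ev // N u = 0 ∧ D u = 0}),
      (1 - p - q) * FG p q ((Ψ z : Ev)) = FG p q z.1.1 * (p * FG p q z.2.1) := by
    intro z
    have h1 : (Ψ z : Ev) = z.1.1 ++ true :: z.2.1 := rfl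
    rw [h1, FG_append, FG_cons_true]
  have ht2 : (1 - p - q) * (∑' e : t, FG p q e.1) = TG p q m * (p * Z p q) := by
    rw [← heq, ← tsum_mul_left]
    rw [tsum_congr hpt, ← hprod, hZmul, TG]
  have hs2 : (∑' e : s, FG p q e.1) = TG p q 0 := by
    rw [TG]
    show _ = (∑' e : ↥{e : Ev | N e ≤ ((0:ℕ):ℤ)}, FG p q e.1)
    have : {e : Ev | N e ≤ ((0:ℕ):ℤ)} = s := by
      ext e; have := N_nonneg e; simp only [hs, Set.mem_setOf_eq]; omega
    rw [this]
  rw [hsplit, mul_add, hs2, ht2]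
  ring

lemma TG_geom (m : ℕ) :
    TG p q m = TG p q 0 * ∑ k ∈ Finset.range (m+1), (p * Z p q / (1-p-q))^k := by
  induction m with
  | zero => simp
  | succ m ih =>
      have hκ : (0:ℝ) < 1 - p - q := by linarith
      have h1 := TG_rec hp hq hpq m
      have h2 : TG p q (m+1) = TG p q 0 + (p * Z p q/(1-p-q)) * TG p q m := by
        field_simp
        linarith
      rw [h2, ih]
      conv_rhs => rw [geom_sum_succ]
      ring

omit hp hq hpq in
lemma fiber_sum (b : Ev) (hb : N b = 0) :
    (1 - p - q) * (∑' e : {e : Ev // N e = 0 ∧ b <:+ e}, FG p q e.1)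
      = FG p q b * TG p q (Bc b - Gc b) := by
  have hDb : D b ≤ 0 := hb ▸ D_le_N b
  have hGB : Gc b ≤ Bc b := by simp [D] at hDb; exact_mod_cast hDb
  have hcast : ((Bc b - Gc b : ℕ) : ℤ) = - D b := by
    simp only [D]
    push_cast [hGB]
    ring
  let Φ : {w : Ev // N w ≤ ((Bc b - Gc b : ℕ):ℤ)} → {e : Ev // N e = 0 ∧ b <:+ e} := fun w =>
    ⟨w.1 ++ b, by
      have h1 : N (w.1 ++ b) = max (N w.1 + D b) (N b) := N_append _ _
      have h3 := N_nonneg w.1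
      have h2 : N w.1 ≤ -D b := by have h4 := w.2; omega
      refine ⟨?_, ⟨w.1, rfl⟩⟩
      rw [h1, hb]
      exact max_eq_right (by omega)⟩
  have hbij : Function.Bijective Φ := by
    constructor
    · rintro ⟨w₁, h₁⟩ ⟨w₂, h₂⟩ h
      have h' : w₁ ++ b = w₂ ++ b := congrArg Subtype.val h
      exact Subtype.ext (List.append_cancel_right h')
    · rintro ⟨e, he1, w, rfl⟩
      have h1 : N (w ++ b) = max (N w + D b) (N b) := N_append _ _
      rw [he1, hb] at h1
      have h2 : N w + D b ≤ 0 := by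
        have := le_max_left (N w + D b) (0:ℤ)
        omega
      exact ⟨⟨w, by rw [hcast]; omega⟩, rfl⟩
  have heq : (∑' w : {w : Ev // N w ≤ ((Bc b - Gc b : ℕ):ℤ)},
      FG p q ((Φ w : {e : Ev // N e = 0 ∧ b <:+ e}) : Ev))
        = ∑' e : {e : Ev // N e = 0 ∧ b <:+ e}, FG p q e.1 :=
    (Equiv.ofBijective Φ hbij).tsum_eq (fun e : {e : Ev // N e = 0 ∧ b <:+ e} => FG p q e.1)
  rw [← heq, ← tsum_mul_left]
  have hpt : ∀ w : {w : Ev // N w ≤ ((Bc b - Gc b : ℕ):ℤ)},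
      (1 - p - q) * FG p q ((Φ w : {e : Ev // N e = 0 ∧ b <:+ e}) : Ev)
        = FG p q w.1 * FG p q b := by
    intro w
    have h1 : ((Φ w : {e : Ev // N e = 0 ∧ b <:+ e}) : Ev) = w.1 ++ b := rfl
    rw [h1, FG_append]
  rw [tsum_congr hpt, tsum_mul_right, TG]
  ring

omit hp hq hpq in
lemma Z_swap : Z q p = Z p q :=
  tsum_congr fun u => FG_D_zero u.1 u.2.2

lemma key_ratio (m₀ : ℕ) (hqp : q ≤ p) :
    q^m₀ * ∑ k ∈ Finset.range (m₀+1), (p * Z p q / (1-p-q))^k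
      ≤ p^m₀ * ∑ k ∈ Finset.range (m₀+1), (q * Z p q / (1-p-q))^k := by
  have hκ : (0:ℝ) < 1 - p - q := by linarith
  have hZ : 0 ≤ Z p q / (1-p-q) := div_nonneg (Z_pos hp hq hpq).le hκ.le
  rw [Finset.mul_sum, Finset.mul_sum]
  apply Finset.sum_le_sum
  intro k hk
  have hk' : k ≤ m₀ := by simp only [Finset.mem_range] at hk; omega
  have e1 : (p * Z p q / (1-p-q))^k = p^k * (Z p q/(1-p-q))^k := by
    rw [mul_div_assoc, mul_pow]
  have e2 : (q * Z p q / (1-p-q))^k = q^k * (Z p q/(1-p-q))^k := by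
    rw [mul_div_assoc, mul_pow]
  rw [e1, e2]
  have core : q^m₀ * p^k ≤ p^m₀ * q^k := by
    have h1 : q^m₀ = q^(m₀-k) * q^k := by rw [← pow_add, Nat.sub_add_cancel hk']
    have h2 : p^m₀ = p^(m₀-k) * p^k := by rw [← pow_add, Nat.sub_add_cancel hk']
    have h3 : q^(m₀-k) ≤ p^(m₀-k) := pow_le_pow_left₀ hq.le hqp _
    calc q^m₀ * p^k = q^(m₀-k) * (q^k * p^k) := by rw [h1]; ring
      _ ≤ p^(m₀-k) * (q^k * p^k) :=
          mul_le_mul_of_nonneg_right h3 (by positivity)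
      _ = p^m₀ * q^k := by rw [h2]; ring
  calc q ^ m₀ * (p ^ k * (Z p q / (1 - p - q)) ^ k)
      = (q^m₀ * p^k) * (Z p q / (1-p-q))^k := by ring
    _ ≤ (p^m₀ * q^k) * (Z p q / (1-p-q))^k :=
        mul_le_mul_of_nonneg_right core (by positivity)
    _ = p ^ m₀ * (q ^ k * (Z p q / (1 - p - q)) ^ k) := by ring

lemma fiber_ineq (hqp : q ≤ p) (b : Ev) (hb : N b = 0) :
    TG q p 0 * (∑' e : {e : Ev // N e = 0 ∧ b <:+ e}, FG p q e.1)
      ≤ TG p q 0 * (∑' e : {e : Ev // N e = 0 ∧ b <:+ e}, FG q p e.1) := by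
  have hκ : (0:ℝ) < 1 - p - q := by linarith
  have hqp' : q + p < 1 := by linarith
  set m₀ := Bc b - Gc b with hm₀
  have hDb : D b ≤ 0 := hb ▸ D_le_N b
  have hGB : Gc b ≤ Bc b := by simp [D] at hDb; exact_mod_cast hDb
  have hBc : Bc b = Gc b + m₀ := by omega
  have hfg : (1-p-q) * (∑' e : {e : Ev // N e = 0 ∧ b <:+ e}, FG p q e.1)
      = FG p q b * TG p q m₀ := fiber_sum b hb
  have hfb : (1-p-q) * (∑' e : {e : Ev // N e = 0 ∧ b <:+ e}, FG q p e.1)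
      = FG q p b * TG q p m₀ := by
    have := fiber_sum (p := q) (q := p) b hb
    rw [show (1:ℝ) - q - p = 1 - p - q from by ring] at this
    exact this
  have hgeomG : TG p q m₀ = TG p q 0 * ∑ k ∈ Finset.range (m₀+1), (p * Z p q / (1-p-q))^k :=
    TG_geom hp hq hpq m₀
  have hgeomB : TG q p m₀ = TG q p 0 * ∑ k ∈ Finset.range (m₀+1), (q * Z p q / (1-p-q))^k := by
    have := TG_geom hq hp hqp' m₀
    rw [Z_swap, show (1:ℝ) - q - p = 1 - p - q from by ring] at this
    exact this
  have hGpos := TG_pos hp hq hpq 0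
  have hBpos := TG_pos hq hp hqp' 0
  have hFGb : FG p q b = ((1-p-q) * p^(Gc b) * q^(Gc b)) * q^m₀ := by
    rw [FG, hBc, pow_add]; ring
  have hFBb : FG q p b = ((1-p-q) * p^(Gc b) * q^(Gc b)) * p^m₀ := by
    rw [FG, hBc, pow_add, show (1:ℝ) - q - p = 1 - p - q from by ring]; ring
  have key := key_ratio hp hq hpq m₀ hqp
  rw [← mul_le_mul_iff_right₀ hκ]
  calc (1-p-q) * (TG q p 0 * (∑' e : {e : Ev // N e = 0 ∧ b <:+ e}, FG p q e.1))
      = TG q p 0 * ((1-p-q) * (∑' e : {e : Ev // N e = 0 ∧ b <:+ e}, FG p q e.1)) := by ring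
    _ = TG q p 0 * (FG p q b * TG p q m₀) := by rw [hfg]
    _ = ((1-p-q) * p^(Gc b) * q^(Gc b)) * (TG q p 0 * TG p q 0)
          * (q^m₀ * ∑ k ∈ Finset.range (m₀+1), (p * Z p q / (1-p-q))^k) := by
        rw [hFGb, hgeomG]; ring
    _ ≤ ((1-p-q) * p^(Gc b) * q^(Gc b)) * (TG q p 0 * TG p q 0)
          * (p^m₀ * ∑ k ∈ Finset.range (m₀+1), (q * Z p q / (1-p-q))^k) := by
        apply mul_le_mul_of_nonneg_left key
        positivity
    _ = TG p q 0 * (FG q p b * TG q p m₀) := by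
        rw [hFBb, hgeomB]; ring
    _ = TG p q 0 * ((1-p-q) * (∑' e : {e : Ev // N e = 0 ∧ b <:+ e}, FG q p e.1)) := by rw [hfb]
    _ = (1-p-q) * (TG p q 0 * (∑' e : {e : Ev // N e = 0 ∧ b <:+ e}, FG q p e.1)) := by ring

end Core

end Aux

set_option maxHeartbeats 2000000 in
/-- Every lower contour set `L₀` in `E₀ = {e : N(e) = 0}` satisfies
`ν(L₀) ≥ ν(E₀)`. -/
theorem stmt_12 (p q π0 : ℝ) (hq0 : 0 < q) (hqp : q < p) (hp1 : p < 1)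
    (hpq0 : 0 < p + q) (hpq1 : p + q < 1) (h0 : 0 < π0) (h1 : π0 < 1) :
    ∀ L : Set Ev, IsLCS {e : Ev | N e = 0} L →
      nu p q π0 {e : Ev | N e = 0} ≤ nu p q π0 L := by
  intro L hL
  obtain ⟨⟨e₀, he₀⟩, hLsub, hlow⟩ := hL
  have hp : 0 < p := lt_trans hq0 hqp
  have hqp1 : q + p < 1 := by linarith
  classical
  set E₀ : Set Ev := {e : Ev | N e = 0} with hE₀
  set M : Set Ev := E₀ \ L with hMdef
  have hnilE : ([] : Ev) ∈ E₀ := by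
    show N ([] : Ev) = 0
    exact N_nil
  have hnilL : ([] : Ev) ∈ L := hlow e₀ he₀ [] hnilE (List.nil_suffix)
  have hsumG : Summable (FG p q) := summable_FG hp hq0 hpq1
  have hsumB : Summable (FG q p) := summable_FG hq0 hp hqp1
  -- notation for the six sums
  set gL : ℝ := ∑' e : L, FG p q e.1 with hgL
  set bL : ℝ := ∑' e : L, FG q p e.1 with hbL
  set gM : ℝ := ∑' e : M, FG p q e.1 with hgM
  set bM : ℝ := ∑' e : M, FG q p e.1 with hbM
  -- `TG _ _ 0` is the sum over `E₀`
  have hTG0 : ∀ r s : ℝ, TG r s 0 = ∑' e : E₀, FG r s e.1 := by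
    intro r s
    rw [TG]
    show (∑' e : ↥{e : Ev | N e ≤ ((0:ℕ):ℤ)}, FG r s e.1) = _
    have hset : {e : Ev | N e ≤ ((0:ℕ):ℤ)} = E₀ := by
      ext e; have := N_nonneg e
      simp only [hE₀, Set.mem_setOf_eq]
      omega
    rw [hset]
  -- decomposition E₀ = L ∪ M
  have hELM : ∀ r s : ℝ, Summable (FG r s) →
      (∑' e : E₀, FG r s e.1) = (∑' e : L, FG r s e.1) + ∑' e : M, FG r s e.1 := by
    intro r s hsum
    have hunion : L ∪ M = E₀ := Set.union_diff_cancel hLsub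
    rw [← hunion]
    exact Summable.tsum_union_disjoint Set.disjoint_sdiff_right (hsum.subtype L) (hsum.subtype M)
  have hGE : TG p q 0 = gL + gM := by rw [hTG0]; exact hELM p q hsumG
  have hBE : TG q p 0 = bL + bM := by rw [hTG0]; exact hELM q p hsumB
  -- the root map on M and its fibers
  let g : ↥M → Ev := fun x => root M x.1
  have hMsumG : Summable (fun x : ↥M => FG p q x.1) := hsumG.subtype M
  have hMsumB : Summable (fun x : ↥M => FG q p x.1) := hsumB.subtype M
  have hsigG : Summable (fun z : (Σ b : Ev, {x : ↥M // g x = b}) => FG p q z.2.1.1) :=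
    (Equiv.sigmaFiberEquiv g).summable_iff.mpr hMsumG
  have hsigB : Summable (fun z : (Σ b : Ev, {x : ↥M // g x = b}) => FG q p z.2.1.1) :=
    (Equiv.sigmaFiberEquiv g).summable_iff.mpr hMsumB
  have hfibG : Summable (fun b : Ev => ∑' x : {x : ↥M // g x = b}, FG p q x.1.1) :=
    ((summable_sigma_of_nonneg (fun z => (FG_pos hp hq0 hpq1 _).le)).mp hsigG).2
  have hfibB : Summable (fun b : Ev => ∑' x : {x : ↥M // g x = b}, FG q p x.1.1) :=
    ((summable_sigma_of_nonneg (fun z => (FG_pos hq0 hp hqp1 _).le)).mp hsigB).2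
  have hdecompG : gM = ∑' b : Ev, ∑' x : {x : ↥M // g x = b}, FG p q x.1.1 := by
    rw [hgM, ← (Equiv.sigmaFiberEquiv g).tsum_eq (fun x : ↥M => FG p q x.1)]
    exact Summable.tsum_sigma hsigG
  have hdecompB : bM = ∑' b : Ev, ∑' x : {x : ↥M // g x = b}, FG q p x.1.1 := by
    rw [hbM, ← (Equiv.sigmaFiberEquiv g).tsum_eq (fun x : ↥M => FG q p x.1)]
    exact Summable.tsum_sigma hsigB
  -- per-fiber inequality
  have hperb : ∀ b : Ev,
      TG q p 0 * (∑' x : {x : ↥M // g x = b}, FG p q x.1.1)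
        ≤ TG p q 0 * (∑' x : {x : ↥M // g x = b}, FG q p x.1.1) := by
    intro b
    by_cases hex : ∃ x : ↥M, g x = b
    · obtain ⟨x₀, hx₀⟩ := hex
      obtain ⟨hrm, hrs, hrmin⟩ := root_spec (M := M) x₀.2
      rw [show root M x₀.1 = b from hx₀] at hrm hrmin
      have hbE : N b = 0 := hrm.1
      have hbnL : b ∉ L := hrm.2
      -- the fiber is exactly {e | N e = 0 ∧ b <:+ e}
      let Θ : {x : ↥M // g x = b} → {e : Ev // N e = 0 ∧ b <:+ e} := fun x =>
        ⟨x.1.1, ⟨x.1.2.1, by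
          have hx := root_suffix M x.1.1
          rw [show root M x.1.1 = b from x.2] at hx
          exact hx⟩⟩
      have hbijΘ : Function.Bijective Θ := by
        constructor
        · rintro ⟨⟨e₁, h₁⟩, hh₁⟩ ⟨⟨e₂, h₂⟩, hh₂⟩ h
          have : e₁ = e₂ := congrArg Subtype.val h
          subst this
          rfl
        · rintro ⟨e, hNe, hbe⟩
          have heM : e ∈ M := by
            refine ⟨hNe, fun heL => ?_⟩
            exact hbnL (hlow e heL b hrm.1 hbe)
          have hroot : root M e = b := (root_eq_iff heM hrm hrmin).mpr hbe
          exact ⟨⟨⟨e, heM⟩, hroot⟩, rfl⟩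
      have heqG : (∑' x : {x : ↥M // g x = b}, FG p q x.1.1)
          = ∑' e : {e : Ev // N e = 0 ∧ b <:+ e}, FG p q e.1 := by
        rw [← (Equiv.ofBijective Θ hbijΘ).tsum_eq
          (fun e : {e : Ev // N e = 0 ∧ b <:+ e} => FG p q e.1)]
        rfl
      have heqB : (∑' x : {x : ↥M // g x = b}, FG q p x.1.1)
          = ∑' e : {e : Ev // N e = 0 ∧ b <:+ e}, FG q p e.1 := by
        rw [← (Equiv.ofBijective Θ hbijΘ).tsum_eq
          (fun e : {e : Ev // N e = 0 ∧ b <:+ e} => FG q p e.1)]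
        rfl
      rw [heqG, heqB]
      exact fiber_ineq hp hq0 hpq1 hqp.le b hbE
    · have hempty : IsEmpty {x : ↥M // g x = b} := ⟨fun x => hex ⟨x.1, x.2⟩⟩
      rw [tsum_empty, tsum_empty, mul_zero, mul_zero]
  -- master inequality
  have master : TG q p 0 * gM ≤ TG p q 0 * bM := by
    rw [hdecompG, hdecompB, ← tsum_mul_left, ← tsum_mul_left]
    exact Summable.tsum_le_tsum hperb (hfibG.mul_left _) (hfibB.mul_left _)
  -- positivity
  have hGLpos : 0 < gL := by
    have := Summable.le_tsum (hsumG.subtype L) (⟨([] : Ev), hnilL⟩ : ↥L)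
      (fun _ _ => (FG_pos hp hq0 hpq1 _).le)
    calc (0:ℝ) < FG p q [] := FG_pos hp hq0 hpq1 []
      _ ≤ gL := this
  have hBLpos : 0 < bL := by
    have := Summable.le_tsum (hsumB.subtype L) (⟨([] : Ev), hnilL⟩ : ↥L)
      (fun _ _ => (FG_pos hq0 hp hqp1 _).le)
    calc (0:ℝ) < FG q p [] := FG_pos hq0 hp hqp1 []
      _ ≤ bL := this
  have hGMnn : 0 ≤ gM := tsum_nonneg (fun x => (FG_pos hp hq0 hpq1 _).le)
  have hBMnn : 0 ≤ bM := tsum_nonneg (fun x => (FG_pos hq0 hp hqp1 _).le)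
  -- from master: GE * bL ≤ gL * BE
  have hGEeq : (∑' e : E₀, FG p q e.1) = gL + gM := by rw [← hTG0, hGE]
  have hBEeq : (∑' e : E₀, FG q p e.1) = bL + bM := by rw [← hTG0, hBE]
  have hcross : (gL + gM) * bL ≤ gL * (bL + bM) := by
    have h1 : (bL + bM) * gM ≤ (gL + gM) * bM := by
      rw [← hGE, ← hBE]; exact master
    nlinarith
  -- convert FB to FG q p in nu and finish
  have hFBL : (∑' e : L, FB p q e.1) = bL := tsum_congr (fun e => FB_eq_FG_swap p q e.1)
  have hFBE : (∑' e : E₀, FB p q e.1) = bL + bM := by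
    rw [← hBEeq]; exact tsum_congr (fun e => FB_eq_FG_swap p q e.1)
  rw [nu, nu]
  rw [show (∑' e : ↥{e : Ev | N e = 0}, FG p q e.1) = gL + gM from hGEeq]
  rw [show (∑' e : ↥{e : Ev | N e = 0}, FB p q e.1) = bL + bM from hFBE]
  rw [show (∑' e : ↥L, FB p q e.1) = bL from hFBL]
  have hπ1 : 0 < 1 - π0 := by linarith
  have hd1 : 0 < (gL + gM) * π0 + (bL + bM) * (1 - π0) := by nlinarith
  have hd2 : 0 < gL * π0 + bL * (1 - π0) := by nlinarith
  rw [div_le_div_iff₀ hd1 hd2]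
  nlinarith [mul_le_mul_of_nonneg_left hcross (mul_pos h0 hπ1).le]

end LeftCensored
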